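/- The cross-product and curl forms of the metric terms coincide: let x = (x₁, x₂, x₃) : ℝ³ → ℝ³ be twice continuously differentiable in the variables (ξ¹, ξ², ξ³). Then for every cyclic permutation (i, j, k) of (1, 2, 3) and every cyclic permutation (n, m, l) of (1, 2, 3), the n-th component of (∂x/∂ξ^j) × (∂x/∂ξ^k) equals minus the i-th component of curl(x_l · grad x_m), i.e. ((∂x/∂ξ^j) × (∂x/∂ξ^k))ₙ = −ê_i · curl(x_l grad x_m). -/

import Mathlib

/-- Partial derivative of `f : ℝ³ → ℝ` in direction `d`. -/
noncomputable def pd3 (d : Fin 3) (f : (Fin 3 → ℝ) → ℝ) (y : Fin 3 → ℝ) : ℝ :=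
  deriv (fun s => f (Function.update y d s)) (y d)

/-- Gradient of `f : ℝ³ → ℝ`: `grad f = (∂₁f, ∂₂f, ∂₃f)`. -/
noncomputable def grad3 (f : (Fin 3 → ℝ) → ℝ) (y : Fin 3 → ℝ) : Fin 3 → ℝ :=
  fun d => pd3 d f y

/-- Curl of a vector field `F : ℝ³ → ℝ³`:
`curl F = (∂₂F₃ - ∂₃F₂, ∂₃F₁ - ∂₁F₃, ∂₁F₂ - ∂₂F₁)`. -/
noncomputable def curl3 (F : (Fin 3 → ℝ) → (Fin 3 → ℝ)) (y : Fin 3 → ℝ) : Fin 3 → ℝ :=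
  ![pd3 1 (fun z => F z 2) y - pd3 2 (fun z => F z 1) y,
    pd3 2 (fun z => F z 0) y - pd3 0 (fun z => F z 2) y,
    pd3 0 (fun z => F z 1) y - pd3 1 (fun z => F z 0) y]

/-- `(i, j, k)` is a cyclic permutation of `(1, 2, 3)` (indices in `Fin 3`). -/
def Cyclic3 (i j k : Fin 3) : Prop := j = i + 1 ∧ k = i + 2
lemma pd3_eq_fderiv {f : (Fin 3 → ℝ) → ℝ} {y : Fin 3 → ℝ} (hf : DifferentiableAt ℝ f y)
    (d : Fin 3) : pd3 d f y = fderiv ℝ f y (Pi.single d 1) := by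
  have hL : HasDerivAt (fun s : ℝ => Function.update y d s) (Pi.single d 1) (y d) := by
    have heq : (fun s : ℝ => Function.update y d s)
        = fun s => y + (s - y d) • (Pi.single d 1 : Fin 3 → ℝ) := by
      funext s; funext e
      by_cases h : e = d
      · subst h; simp
      · simp [Function.update_of_ne h, Pi.single_apply, h]
    rw [heq]
    have h1 : HasDerivAt (fun s : ℝ => s - y d) 1 (y d) := (hasDerivAt_id _).sub_const _
    simpa using (h1.smul_const ((Pi.single d 1 : Fin 3 → ℝ))).const_add y
  have hupd : Function.update y d (y d) = y := Function.update_eq_self d y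
  have hf' : HasFDerivAt f (fderiv ℝ f y) (Function.update y d (y d)) := by
    rw [hupd]; exact hf.hasFDerivAt
  exact (hf'.comp_hasDerivAt (y d) hL).deriv

lemma pd3_fderiv_form {g : (Fin 3 → ℝ) → ℝ} (hg : ContDiff ℝ 2 g) (b : Fin 3) :
    (fun z => pd3 b g z) = fun z => fderiv ℝ g z (Pi.single b 1) :=
  funext fun z => pd3_eq_fderiv ((hg.differentiable two_ne_zero) z) b

lemma diff_pd3 {g : (Fin 3 → ℝ) → ℝ} (hg : ContDiff ℝ 2 g) (b : Fin 3) (z : Fin 3 → ℝ) :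
    DifferentiableAt ℝ (fun w => pd3 b g w) z := by
  rw [pd3_fderiv_form hg b]
  have hF : DifferentiableAt ℝ (fderiv ℝ g) z :=
    ((hg.fderiv_right (le_refl 2)).differentiable one_ne_zero) z
  exact hF.clm_apply (differentiableAt_const _)

lemma pd3_pd3_symm {g : (Fin 3 → ℝ) → ℝ} (hg : ContDiff ℝ 2 g) (a b : Fin 3) (y : Fin 3 → ℝ) :
    pd3 a (fun z => pd3 b g z) y = pd3 b (fun z => pd3 a g z) y := by
  have hdiff : ∀ z, DifferentiableAt ℝ g z := fun z => (hg.differentiable two_ne_zero) z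
  have hF : DifferentiableAt ℝ (fderiv ℝ g) y :=
    ((hg.fderiv_right (le_refl 2)).differentiable one_ne_zero) y
  have key : ∀ c d : Fin 3, pd3 c (fun z => pd3 d g z) y
      = fderiv ℝ (fderiv ℝ g) y (Pi.single c 1) (Pi.single d 1) := by
    intro c d
    rw [pd3_fderiv_form hg d,
      pd3_eq_fderiv (hF.clm_apply (differentiableAt_const _)) c,
      fderiv_clm_apply hF (differentiableAt_const _)]
    simp
  rw [key a b, key b a]
  exact second_derivative_symmetric (fun z => (hdiff z).hasFDerivAt) hF.hasFDerivAt _ _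

lemma pd3_mul {f g : (Fin 3 → ℝ) → ℝ} {y : Fin 3 → ℝ} (hf : DifferentiableAt ℝ f y)
    (hg : DifferentiableAt ℝ g y) (d : Fin 3) :
    pd3 d (fun z => f z * g z) y = pd3 d f y * g y + f y * pd3 d g y := by
  rw [pd3_eq_fderiv (f := fun z => f z * g z) (hf.mul hg) d, pd3_eq_fderiv hf d, pd3_eq_fderiv hg d, fderiv_fun_mul hf hg]
  simp; ring

lemma key_lemma {f g : (Fin 3 → ℝ) → ℝ} (hf : ContDiff ℝ 2 f) (hg : ContDiff ℝ 2 g)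
    (a b : Fin 3) (y : Fin 3 → ℝ) :
    pd3 a (fun z => f z * pd3 b g z) y - pd3 b (fun z => f z * pd3 a g z) y
      = pd3 a f y * pd3 b g y - pd3 b f y * pd3 a g y := by
  rw [pd3_mul ((hf.differentiable two_ne_zero) y) (diff_pd3 hg b y) a,
    pd3_mul ((hf.differentiable two_ne_zero) y) (diff_pd3 hg a y) b,
    pd3_pd3_symm hg a b y]
  ring


/-- The cross-product and curl forms of the metric terms coincide: if
`x = (x₁,x₂,x₃) : ℝ³ → ℝ³` is twice continuously differentiable, then for all cyclic
permutations `(i,j,k)` and `(n,m,l)` of `(1,2,3)`,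
`((∂x/∂ξʲ) × (∂x/∂ξᵏ))ₙ = -êᵢ ⋅ curl (x_l grad x_m)`. -/
theorem metric_terms_cross_eq_curl_form
    (x : (Fin 3 → ℝ) → (Fin 3 → ℝ)) (hx : ∀ n : Fin 3, ContDiff ℝ 2 (fun y => x y n)) :
    ∀ i j k n m l : Fin 3, Cyclic3 i j k → Cyclic3 n m l →
      ∀ y : Fin 3 → ℝ,
        crossProduct (fun a => pd3 j (fun z => x z a) y) (fun a => pd3 k (fun z => x z a) y) n
          = -(curl3 (fun z => x z l • grad3 (fun w => x w m) z) y i) := by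
  intro i j k n m l hijk hnml y
  obtain ⟨hj, hk⟩ := hijk
  obtain ⟨hm, hl⟩ := hnml
  subst hj hk hm hl
  have hkey := key_lemma (hx (n+2)) (hx (n+1)) (i+1) (i+2) y
  have hi : i = 0 ∨ i = 1 ∨ i = 2 := by omega
  have hn : n = 0 ∨ n = 1 ∨ n = 2 := by omega
  rcases hi with rfl | rfl | rfl <;> rcases hn with rfl | rfl | rfl <;>
    simp only [cross_apply, curl3, grad3, Pi.smul_apply, smul_eq_mul, Fin.isValue,
      Matrix.cons_val_zero, Matrix.cons_val_one, Matrix.head_cons, Matrix.cons_val_two,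
      Matrix.tail_cons, Fin.reduceAdd, Fin.zero_add] at hkey ⊢ <;>
    linear_combination hkey
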